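/- The formal power series S(x) = Σ_{r=0}^∞ (x)_{r+1} x^r ∈ ℤ⟦x, q⟦, where (x)_{r+1} = (1 − x)(1 − xq)⋯(1 − x q^r), satisfies the functional equation S(x) = 1 − q x² − q² x³ S(qx), where S(qx) denotes the series obtained from S(x) by substituting qx for x. -/

import Mathlib

open PowerSeries Finset

/-- `ℤ⟦x,q⟧`, realized as `(ℤ⟦q⟧)⟦x⟧`. -/
abbrev Zxq : Type := PowerSeries (PowerSeries ℤ)

/-- The variable `x`. -/
noncomputable def xv : Zxq := PowerSeries.X

/-- The variable `q`. -/
noncomputable def qv : Zxq := PowerSeries.C (R := PowerSeries ℤ) PowerSeries.X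

/-- `(x)_n = ∏_{k=0}^{n-1} (1 - x q^k)`; so `(x)_{r+1} = (1-x)(1-xq)⋯(1-xq^r)`. -/
noncomputable def xPoch (n : ℕ) : Zxq :=
  ∏ k ∈ Finset.range n, (1 - xv * qv ^ k)

/-- `S(x) = Σ_{r=0}^∞ (x)_{r+1} x^r`, defined by its coefficient of `x^a`: the `r`-th
term is divisible by `x^r`, so only terms with `r ≤ a` contribute. -/
noncomputable def zagierS : Zxq :=
  PowerSeries.mk fun a =>
    PowerSeries.coeff (R := PowerSeries ℤ) a (∑ r ∈ Finset.range (a + 1), xPoch (r + 1) * xv ^ r)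

noncomputable abbrev q0 : PowerSeries ℤ := PowerSeries.X

/-- truncated sum -/
noncomputable def SN (N : ℕ) : Zxq := ∑ r ∈ Finset.range N, xPoch (r + 1) * xv ^ r

/-- `(xq)_n = ∏_{k<n} (1 - x q^{k+1})` -/
noncomputable def yPoch (n : ℕ) : Zxq :=
  ∏ k ∈ Finset.range n, (1 - xv * qv ^ (k + 1))

lemma xPoch_succ (n : ℕ) : xPoch (n + 1) = (1 - xv) * yPoch n := by
  rw [xPoch, Finset.prod_range_succ', yPoch, pow_zero, mul_one, mul_comm]

lemma yPoch_succ (n : ℕ) : yPoch (n + 1) = yPoch n * (1 - xv * qv ^ (n + 1)) :=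
  Finset.prod_range_succ _ _

lemma rescale_C' (a r : PowerSeries ℤ) :
    rescale a (PowerSeries.C (R := PowerSeries ℤ) r) = PowerSeries.C (R := PowerSeries ℤ) r := by
  ext n
  rw [coeff_rescale]
  cases n with
  | zero => simp
  | succ n => simp [coeff_C]

lemma rescale_xPoch (n : ℕ) : rescale q0 (xPoch n) = yPoch n := by
  rw [xPoch, yPoch, map_prod]
  refine Finset.prod_congr rfl fun k _ => ?_
  rw [map_sub, map_one, map_mul, map_pow]
  rw [xv, qv, rescale_X, rescale_C']
  rw [← qv, ← xv]
  ring

/-- coefficient stability -/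
lemma coeff_SN (m M : ℕ) (h : m < M) :
    PowerSeries.coeff (R := PowerSeries ℤ) m (SN M) = PowerSeries.coeff (R := PowerSeries ℤ) m zagierS := by
  rw [zagierS, coeff_mk, SN]
  rw [← Finset.sum_range_add_sum_Ico _ (Nat.succ_le_of_lt h)]
  rw [map_add, add_eq_left, map_sum]
  refine Finset.sum_eq_zero fun r hr => ?_
  rw [Finset.mem_Ico] at hr
  rw [xv, coeff_mul_X_pow']
  rw [if_neg (by omega)]

lemma SN_eq (N : ℕ) :
    SN (N + 2) = 1 - qv * xv ^ 2 - qv ^ 2 * xv ^ 3 * rescale q0 (SN N)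
      - yPoch (N + 1) * xv ^ (N + 2) := by
  induction N with
  | zero =>
    rw [SN, show (0:ℕ)+2 = 2 from rfl, Finset.sum_range_succ, Finset.sum_range_one,
      SN, Finset.range_zero, Finset.sum_empty, map_zero]
    rw [show xPoch 1 = 1 - xv by rw [xPoch]; simp,
      show xPoch 2 = (1 - xv) * (1 - xv * qv) by
        rw [xPoch, Finset.prod_range_succ, Finset.prod_range_one]; ring_nf,
      show yPoch 1 = 1 - xv * qv ^ 1 by rw [yPoch, Finset.prod_range_one]]
    ring
  | succ N ih =>
    have hs : SN (N + 3) = SN (N + 2) + xPoch (N + 3) * xv ^ (N + 2) := by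
      rw [SN, SN, Finset.sum_range_succ]
    have hr : rescale q0 (SN (N + 1)) =
        rescale q0 (SN N) + yPoch (N + 1) * (PowerSeries.C (R := PowerSeries ℤ) (q0 ^ N)) * xv ^ N := by
      rw [SN, SN, Finset.sum_range_succ, map_add, map_mul, map_pow, rescale_xPoch]
      rw [xv, rescale_X, map_pow, mul_pow, mul_assoc]
    have hq : (PowerSeries.C (R := PowerSeries ℤ) (q0 ^ N)) = qv ^ N := by
      rw [qv, map_pow]
    rw [show N + 1 + 2 = N + 3 from rfl, hs, ih, hr, hq,
      xPoch_succ (N + 2), yPoch_succ (N + 1), yPoch_succ N]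
    ring

/-- `S(x) = 1 - q x² - q² x³ S(qx)`, where `S(qx)` is obtained by substituting `qx` for
`x`, i.e. by `rescale q` on `(ℤ⟦q⟧)⟦x⟧` (which multiplies the coefficient of `x^n` by `q^n`). -/
theorem zagierS_functional_equation :
    zagierS = 1 - qv * xv ^ 2 - qv ^ 2 * xv ^ 3 *
      PowerSeries.rescale (PowerSeries.X : PowerSeries ℤ) zagierS := by
  refine PowerSeries.ext fun n => ?_
  have h1 : (PowerSeries.coeff (R := PowerSeries ℤ) n) zagierS
      = (PowerSeries.coeff (R := PowerSeries ℤ) n) (SN (n + 3)) := (coeff_SN n (n+3) (by omega)).symm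
  have key : ∀ f : Zxq, (PowerSeries.coeff (R := PowerSeries ℤ) n) (qv ^ 2 * xv ^ 3 * f)
      = if 3 ≤ n then q0 ^ 2 * (PowerSeries.coeff (R := PowerSeries ℤ) (n - 3)) f else 0 := by
    intro f
    rw [show qv ^ 2 * xv ^ 3 * f = (qv ^ 2 * f) * xv ^ 3 by ring, xv, coeff_mul_X_pow']
    split
    · rw [qv, ← map_pow, coeff_C_mul]
    · rfl
  have hz : (PowerSeries.coeff (R := PowerSeries ℤ) n) (yPoch (n + 2) * xv ^ (n + 3)) = 0 := by
    rw [xv, coeff_mul_X_pow', if_neg (by omega)]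
  have he : (PowerSeries.coeff (R := PowerSeries ℤ) n) (qv ^ 2 * xv ^ 3 * rescale q0 (SN (n + 1)))
      = (PowerSeries.coeff (R := PowerSeries ℤ) n)
        (qv ^ 2 * xv ^ 3 * rescale (PowerSeries.X : PowerSeries ℤ) zagierS) := by
    rw [key, key]
    split
    · rw [coeff_rescale, coeff_rescale, coeff_SN (n - 3) (n + 1) (by omega)]
    · rfl
  rw [h1, show n + 3 = (n + 1) + 2 from rfl, SN_eq (n + 1),
    map_sub, map_sub, map_sub, map_sub, hz, sub_zero, he, map_sub]
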